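/- Let x, y, z be positive real numbers with y ≠ x + z, let φ ∈ (0, π), and let k be a real number. Assume that sinh(x + z) − sinh(y) = (2k / sin(φ)) · sinh(x) · sinh(z) and that cosh(y) = cosh(x + z) − 2 sin²(φ) · sinh(x) · sinh(z). Then, setting L = x + y + z, one has k = sin³(φ) · cosh(L/2) / sinh(L/2). -/

import Mathlib

theorem stmt_5 (x y z φ k : ℝ) (hx : 0 < x) (hy : 0 < y) (hz : 0 < z)
    (hne : y ≠ x + z) (hφ : φ ∈ Set.Ioo 0 Real.pi)
    (hcompat : Real.sinh (x + z) - Real.sinh y =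
      (2 * k / Real.sin φ) * Real.sinh x * Real.sinh z)
    (hcos : Real.cosh y =
      Real.cosh (x + z) - 2 * Real.sin φ ^ 2 * Real.sinh x * Real.sinh z)
    (L : ℝ) (hL : L = x + y + z) :
    k = Real.sin φ ^ 3 * Real.cosh (L / 2) / Real.sinh (L / 2) := by
  obtain ⟨hφ0, hφπ⟩ := hφ
  have hsφ : 0 < Real.sin φ := Real.sin_pos_of_pos_of_lt_pi hφ0 hφπ
  set m := L / 2 with hm
  set d := (x + z - y) / 2 with hd
  have hxz : x + z = m + d := by rw [hm, hd, hL]; ring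
  have hyy : y = m - d := by rw [hm, hd, hL]; ring
  have h1 : Real.sinh (x + z) - Real.sinh y = 2 * Real.cosh m * Real.sinh d := by
    rw [hxz, hyy, Real.sinh_add, Real.sinh_sub]; ring
  have h2 : Real.cosh (x + z) - Real.cosh y = 2 * Real.sinh m * Real.sinh d := by
    rw [hxz, hyy, Real.cosh_add, Real.cosh_sub]; ring
  have hS : 0 < Real.sinh x * Real.sinh z :=
    mul_pos (Real.sinh_pos_iff.2 hx) (Real.sinh_pos_iff.2 hz)
  have hmpos : 0 < Real.sinh m := by
    apply Real.sinh_pos_iff.2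
    rw [hm, hL]; linarith
  have key : k * Real.sinh m = Real.sin φ ^ 3 * Real.cosh m := by
    have e1 : 2 * Real.cosh m * Real.sinh d =
        (2 * k / Real.sin φ) * Real.sinh x * Real.sinh z := by
      rw [← h1]; exact hcompat
    have e2 : 2 * Real.sinh m * Real.sinh d =
        2 * Real.sin φ ^ 2 * Real.sinh x * Real.sinh z := by
      rw [← h2]; linarith [hcos]
    have e3 := congrArg (· * Real.sinh m) e1
    have e4 := congrArg (· * Real.cosh m) e2
    try simp only at e3 e4
    have e5 : (2 * k / Real.sin φ) * Real.sinh x * Real.sinh z * Real.sinh m =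
        2 * Real.sin φ ^ 2 * Real.sinh x * Real.sinh z * Real.cosh m := by
      rw [← e3, ← e4]; ring
    have hS' : Real.sinh x * Real.sinh z ≠ 0 := ne_of_gt hS
    field_simp at e5
    nlinarith [hS, hsφ, e5]
  field_simp
  linarith [key]
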